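/- arXiv:2006.05319 — 4 statements merged into one kernel-verified Lean document; each statement's English description precedes it below -/
import Mathlib

section
/- A symmetric matrix C is completely positive if and only if ⟨C, X⟩ ≥ 0 for every copositive matrix X, where ⟨·,·⟩ is the trace inner product. In other words, the completely positive cone and the copositive cone are dual to each other. -/
open Matrix

/-- The completely positive cone: matrices of the form B * Bᵀ with B entrywise nonnegative. -/
def CompletelyPositive {d : ℕ} (C : Matrix (Fin d) (Fin d) ℝ) : Prop :=
  ∃ (k : ℕ) (B : Matrix (Fin d) (Fin k) ℝ), (∀ i j, 0 ≤ B i j) ∧ C = B * B.transpose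

/-- A symmetric matrix X is copositive if yᵀXy ≥ 0 for all entrywise nonnegative y. -/
def Copositive {d : ℕ} (X : Matrix (Fin d) (Fin d) ℝ) : Prop :=
  ∀ y : Fin d → ℝ, (∀ i, 0 ≤ y i) → 0 ≤ y ⬝ᵥ X.mulVec y

open Set Topology
open scoped InnerProductSpace

set_option linter.unusedVariables false

section CompactConvexHull
variable {E : Type*} [NormedAddCommGroup E] [NormedSpace ℝ E] [FiniteDimensional ℝ E]

lemma isCompact_convexHull_of_isCompact {s : Set E} (hs : IsCompact s) :
    IsCompact (convexHull ℝ s) := by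
  rcases s.eq_empty_or_nonempty with rfl | ⟨x₀, hx₀⟩
  · simp
  set n := Module.finrank ℝ E + 1 with hn
  set f : (Fin n → ℝ) × (Fin n → E) → E := fun p => ∑ i, p.1 i • p.2 i with hf
  set D : Set ((Fin n → ℝ) × (Fin n → E)) := stdSimplex ℝ (Fin n) ×ˢ Set.univ.pi (fun _ => s)
    with hD
  have hcomp : IsCompact D := (isCompact_stdSimplex (𝕜 := ℝ) (ι := Fin n)).prod (isCompact_univ_pi fun _ => hs)
  have hcont : Continuous f :=
    continuous_finset_sum _ fun i _ =>
      ((continuous_apply i).comp continuous_fst).smul ((continuous_apply i).comp continuous_snd)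
  have himg : convexHull ℝ s = f '' D := by
    apply Subset.antisymm
    · intro x hx
      obtain ⟨ι, hfin, z, w, hrange, hindep, hpos, hsum1, hsumx⟩ :=
        eq_pos_convex_span_of_mem_convexHull hx
      have hcard : Fintype.card ι ≤ n := by
        refine hindep.card_le_finrank_succ.trans ?_
        have := Submodule.finrank_le (vectorSpan ℝ (Set.range z))
        omega
      obtain ⟨e⟩ : Nonempty (ι ↪ Fin n) := by
        refine Function.Embedding.nonempty_of_card_le (by simpa using hcard)
      classical
      set w' : Fin n → ℝ := fun j => ∑ i, if e i = j then w i else 0 with hw'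
      set z' : Fin n → E := fun j => if h : ∃ i, e i = j then z h.choose else x₀ with hz'
      have hz'e : ∀ i, z' (e i) = z i := by
        intro i
        have h : ∃ i', e i' = e i := ⟨i, rfl⟩
        have : h.choose = i := e.injective h.choose_spec
        simp [hz', dif_pos h, this]
      refine ⟨(w', z'), ⟨⟨fun j => Finset.sum_nonneg fun i _ => ?_, ?_⟩, fun j _ => ?_⟩, ?_⟩
      · split <;> simp [le_of_lt, hpos _]
      · rw [Finset.sum_comm]
        simpa [Finset.sum_ite_eq'] using hsum1
      · by_cases h : ∃ i, e i = j
        · simp only [hz', dif_pos h]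
          exact hrange ⟨h.choose, rfl⟩
        · simp only [hz', dif_neg h]; exact hx₀
      · simp only [hf]
        calc ∑ j, w' j • z' j = ∑ j, ∑ i, (if e i = j then w i else 0) • z' j := by
              simp [hw', Finset.sum_smul]
          _ = ∑ i, ∑ j, (if e i = j then w i • z' j else 0) := by
              rw [Finset.sum_comm]; simp [ite_smul]
          _ = ∑ i, w i • z i := by
              refine Finset.sum_congr rfl fun i _ => ?_
              rw [Finset.sum_ite_eq Finset.univ (e i) (fun j => w i • z' j)]
              simp [hz'e]
          _ = x := hsumx
    · rintro - ⟨⟨w, z⟩, ⟨⟨hw0, hw1⟩, hz⟩, rfl⟩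
      have := Finset.univ.centerMass_mem_convexHull (w := w) (z := z)
        (fun i _ => hw0 i) (by rw [hw1]; norm_num) (fun i _ => hz i trivial)
      rwa [Finset.centerMass_eq_of_sum_1 _ _ hw1] at this
  rw [himg]
  exact hcomp.image hcont

end CompactConvexHull

namespace CPAux

variable {d : ℕ}

lemma cp_of_exists {C : Matrix (Fin d) (Fin d) ℝ} (ι : Type) [Fintype ι]
    (B : Matrix (Fin d) ι ℝ) (hB : ∀ i j, 0 ≤ B i j) (hC : C = B * B.transpose) :
    CompletelyPositive C := by
  classical
  let e := Fintype.equivFin ι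
  refine ⟨Fintype.card ι, B.submatrix id e.symm, fun i j => hB _ _, ?_⟩
  subst hC
  ext i m
  simp only [Matrix.mul_apply, Matrix.transpose_apply, Matrix.submatrix_apply, id]
  exact Fintype.sum_equiv e.symm (fun x => B i (e.symm x) * B m (e.symm x)) (fun j => B i j * B m j) (fun j => rfl) |>.symm

lemma cp_zero : CompletelyPositive (0 : Matrix (Fin d) (Fin d) ℝ) :=
  ⟨0, 0, fun i j => le_refl _, by ext i m; simp [Matrix.mul_apply]⟩

lemma cp_add {C₁ C₂ : Matrix (Fin d) (Fin d) ℝ} (h₁ : CompletelyPositive C₁)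
    (h₂ : CompletelyPositive C₂) : CompletelyPositive (C₁ + C₂) := by
  obtain ⟨k₁, B₁, hB₁, rfl⟩ := h₁
  obtain ⟨k₂, B₂, hB₂, rfl⟩ := h₂
  refine cp_of_exists (Fin k₁ ⊕ Fin k₂) (Matrix.of fun i j => Sum.elim (B₁ i) (B₂ i) j)
    (fun i j => by cases j <;> simp [hB₁, hB₂]) ?_
  ext i m
  simp [Matrix.mul_apply, Fintype.sum_sum_type]

lemma cp_smul {C : Matrix (Fin d) (Fin d) ℝ} {c : ℝ} (hc : 0 ≤ c)
    (h : CompletelyPositive C) : CompletelyPositive (c • C) := by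
  obtain ⟨k, B, hB, rfl⟩ := h
  refine ⟨k, Real.sqrt c • B, fun i j => mul_nonneg (Real.sqrt_nonneg c) (hB i j), ?_⟩
  ext i m
  simp only [Matrix.mul_apply, Matrix.smul_apply, Matrix.transpose_apply, smul_eq_mul,
    Matrix.smul_apply, Finset.mul_sum]
  refine Finset.sum_congr rfl fun j _ => ?_
  have : Real.sqrt c * Real.sqrt c = c := Real.mul_self_sqrt hc
  calc c * (B i j * B m j) = (√c * √c) * (B i j * B m j) := by rw [this]
    _ = √c * B i j * (√c * B m j) := by ring

lemma cp_outer {v : Fin d → ℝ} (hv : ∀ i, 0 ≤ v i) :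
    CompletelyPositive (Matrix.of fun i j => v i * v j) := by
  refine cp_of_exists Unit (Matrix.of fun i (_ : Unit) => v i) (fun i _ => hv i) ?_
  ext i m
  simp [Matrix.mul_apply]

lemma trace_mul_eq (C X : Matrix (Fin d) (Fin d) ℝ) :
    (C * X).trace = ∑ i, ∑ j, C i j * X j i := by
  simp [Matrix.trace, Matrix.mul_apply, Matrix.diag]

lemma forward {C : Matrix (Fin d) (Fin d) ℝ} (h : CompletelyPositive C)
    {X : Matrix (Fin d) (Fin d) ℝ} (hX : Copositive X) : 0 ≤ (C * X).trace := by
  obtain ⟨k, B, hB, rfl⟩ := h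
  rw [trace_mul_eq]
  have key : (∑ i : Fin d, ∑ j : Fin d, (B * B.transpose) i j * X j i : ℝ)
      = ∑ p : Fin k, ∑ i : Fin d, ∑ j : Fin d, B i p * (X i j * B j p) := by
    simp only [Matrix.mul_apply, Matrix.transpose_apply, Finset.sum_mul]
    calc (∑ i : Fin d, ∑ j : Fin d, ∑ p : Fin k, B i p * B j p * X j i : ℝ)
        = ∑ i : Fin d, ∑ p : Fin k, ∑ j : Fin d, B i p * B j p * X j i :=
          Finset.sum_congr rfl fun i _ => Finset.sum_comm
      _ = ∑ p : Fin k, ∑ i : Fin d, ∑ j : Fin d, B i p * B j p * X j i :=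
          Finset.sum_comm
      _ = ∑ p : Fin k, ∑ j : Fin d, ∑ i : Fin d, B i p * B j p * X j i :=
          Finset.sum_congr rfl fun p _ => Finset.sum_comm
      _ = ∑ p : Fin k, ∑ i : Fin d, ∑ j : Fin d, B i p * (X i j * B j p) :=
          Finset.sum_congr rfl fun p _ => Finset.sum_congr rfl fun i _ =>
            Finset.sum_congr rfl fun j _ => by ring
  rw [key]
  refine Finset.sum_nonneg fun p _ => ?_
  have := hX (fun i => B i p) (fun i => hB i p)
  simpa [dotProduct, Matrix.mulVec, Finset.mul_sum] using this

end CPAux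


namespace CPAux

variable {d : ℕ}

noncomputable section

def toELM : Matrix (Fin d) (Fin d) ℝ →ₗ[ℝ] EuclideanSpace ℝ (Fin d × Fin d) where
  toFun M := WithLp.toLp 2 (fun p : Fin d × Fin d => M p.1 p.2)
  map_add' A B := rfl
  map_smul' c A := rfl

lemma toELM_apply (M : Matrix (Fin d) (Fin d) ℝ) (p : Fin d × Fin d) :
    toELM M p = M p.1 p.2 := rfl

lemma toELM_inj : Function.Injective (toELM (d := d)) := fun A B h => by
  ext i j; exact congrArg (fun x => x (i, j)) h

lemma cont_toELM : Continuous (toELM (d := d)) :=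
  toELM.continuous_of_finiteDimensional

lemma inner_eq (x y : EuclideanSpace ℝ (Fin d × Fin d)) :
    ⟪x, y⟫_ℝ = ∑ p : Fin d × Fin d, x p * y p := by
  simp [PiLp.inner_apply, RCLike.inner_apply, conj_trivial, mul_comm]

lemma contEval {ι : Type*} [Fintype ι] (p : ι) :
    Continuous (fun y : EuclideanSpace ℝ ι => y p) := by
  exact (continuous_apply p).comp (PiLp.continuous_ofLp 2 (fun _ : ι => ℝ))

end

end CPAux

namespace CPAux

variable {d : ℕ}


noncomputable section

def CPset (d : ℕ) : Set (Matrix (Fin d) (Fin d) ℝ) := {C | CompletelyPositive C}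

lemma convex_CPset : Convex ℝ (CPset d) := fun _ hx _ hy a b ha hb _ =>
  cp_add (cp_smul ha hx) (cp_smul hb hy)

def Kcone (d : ℕ) : ConvexCone ℝ (EuclideanSpace ℝ (Fin d × Fin d)) where
  carrier := toELM '' CPset d
  smul_mem' := by
    rintro c hc - ⟨C, hC, rfl⟩
    exact ⟨c • C, cp_smul hc.le hC, (toELM.map_smul c C)⟩
  add_mem' := by
    rintro - ⟨C₁, hC₁, rfl⟩ - ⟨C₂, hC₂, rfl⟩
    exact ⟨C₁ + C₂, cp_add hC₁ hC₂, (toELM.map_add C₁ C₂)⟩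

def T (d : ℕ) : Set (EuclideanSpace ℝ (Fin d)) :=
  {v | (∀ i, 0 ≤ v i) ∧ ∑ i, v i ^ 2 = 1}

def g (v : EuclideanSpace ℝ (Fin d)) : EuclideanSpace ℝ (Fin d × Fin d) :=
  toELM (Matrix.of fun i j => v i * v j)

def S (d : ℕ) : Set (EuclideanSpace ℝ (Fin d × Fin d)) := g '' T d

lemma isCompact_T : IsCompact (T d) := by
  have hcl : IsClosed (T d) := by
    have h1 : T d = (⋂ i, {v : EuclideanSpace ℝ (Fin d) | 0 ≤ v i}) ∩
        {v : EuclideanSpace ℝ (Fin d) | ∑ i, v i ^ 2 = 1} := by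
      ext v; simp [T, Set.mem_iInter]
    rw [h1]
    exact (isClosed_iInter fun i => isClosed_le continuous_const (contEval i)).inter
      (isClosed_eq (continuous_finset_sum _ fun i _ => (contEval i).pow 2) continuous_const)
  have hsub : T d ⊆ Metric.closedBall 0 1 := by
    intro v ⟨_, hv1⟩
    rw [Metric.mem_closedBall, dist_zero_right, EuclideanSpace.norm_eq]
    have : ∑ i, ‖v i‖ ^ 2 = 1 := by simpa [Real.norm_eq_abs, sq_abs] using hv1
    rw [this, Real.sqrt_one]
  exact (isCompact_closedBall 0 1).of_isClosed_subset hcl hsub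

lemma cont_g : Continuous (g (d := d)) := by
  refine cont_toELM.comp ?_
  exact continuous_pi fun i => continuous_pi fun j => (contEval i).mul (contEval j)

lemma isCompact_S : IsCompact (S d) := isCompact_T.image cont_g

def trE (y : EuclideanSpace ℝ (Fin d × Fin d)) : ℝ := ∑ i, y (i, i)

lemma cont_trE : Continuous (trE (d := d)) :=
  continuous_finset_sum _ fun i _ => contEval (i, i)

lemma trE_smul (t : ℝ) (y : EuclideanSpace ℝ (Fin d × Fin d)) :
    trE (t • y) = t * trE y := by
  simp [trE, Finset.mul_sum]

lemma trE_convexHull : ∀ x ∈ convexHull ℝ (S d), trE x = 1 := by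
  have hconv : Convex ℝ {y : EuclideanSpace ℝ (Fin d × Fin d) | trE y = 1} := by
    intro x hx y hy a b ha hb hab
    have : trE (a • x + b • y) = a * trE x + b * trE y := by
      simp only [trE, Finset.mul_sum, ← Finset.sum_add_distrib]
      rfl
    simp only [Set.mem_setOf_eq] at hx hy ⊢
    rw [this, hx, hy]; linarith
  have hS : S d ⊆ {y | trE y = 1} := by
    rintro - ⟨v, ⟨_, hv1⟩, rfl⟩
    simpa [trE, g, toELM_apply, sq] using hv1
  exact fun x hx => convexHull_min hS hconv hx

end

end CPAux

namespace CPAux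

variable {d : ℕ}

noncomputable section

def Rset (d : ℕ) : Set (EuclideanSpace ℝ (Fin d × Fin d)) :=
  {y | ∃ t : ℝ, 0 ≤ t ∧ ∃ x ∈ convexHull ℝ (S d), y = t • x}

def e₀ (hd : 0 < d) : EuclideanSpace ℝ (Fin d) := WithLp.toLp 2 (fun i => if i = ⟨0, hd⟩ then (1 : ℝ) else 0)

lemma e₀_mem_T (hd : 0 < d) : e₀ hd ∈ T d := by
  constructor
  · intro i; unfold e₀; simp only [WithLp.ofLp_toLp]; split <;> norm_num
  · have h : ∀ i : Fin d, (e₀ hd) i ^ 2 = if i = ⟨0, hd⟩ then (1 : ℝ) else 0 := by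
      intro i; unfold e₀; simp only [WithLp.ofLp_toLp]; split <;> norm_num
    simp [h]

lemma S_nonempty (hd : 0 < d) : (S d).Nonempty := ⟨g (e₀ hd), e₀ hd, e₀_mem_T hd, rfl⟩

lemma Kcone_eq_Rset (hd : 0 < d) : (Kcone d : Set (EuclideanSpace ℝ (Fin d × Fin d))) = Rset d := by
  apply Subset.antisymm
  · rintro - ⟨C, ⟨k, B, hB, rfl⟩, rfl⟩
    classical
    set lam : Fin k → ℝ := fun p => ∑ i, B i p ^ 2 with hlam
    have hlam0 : ∀ p, 0 ≤ lam p := fun p => Finset.sum_nonneg fun i _ => sq_nonneg _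
    set t : ℝ := ∑ p, lam p with ht
    have ht0 : 0 ≤ t := Finset.sum_nonneg fun p _ => hlam0 p
    set vp : Fin k → EuclideanSpace ℝ (Fin d) :=
      fun p => if lam p = 0 then e₀ hd else WithLp.toLp 2 (fun i => B i p / Real.sqrt (lam p)) with hvp
    have hvpT : ∀ p, vp p ∈ T d := by
      intro p
      by_cases h : lam p = 0
      · simp only [hvp, if_pos h]; exact e₀_mem_T hd
      · simp only [hvp, if_neg h, T, Set.mem_setOf_eq, WithLp.ofLp_toLp]
        constructor
        · intro i; exact div_nonneg (hB i p) (Real.sqrt_nonneg _)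
        · have : ∀ i : Fin d, (B i p / Real.sqrt (lam p)) ^ 2 = B i p ^ 2 / lam p := by
            intro i; rw [div_pow, Real.sq_sqrt (hlam0 p)]
          simp only [this, ← Finset.sum_div, ← hlam]
          exact div_self h
    have hkey : ∀ p : Fin k, ∀ i j : Fin d, B i p * B j p = lam p * (vp p i * vp p j) := by
      intro p i j
      by_cases h : lam p = 0
      · have hz : ∀ m, B m p = 0 := by
          intro m
          have := (Finset.sum_eq_zero_iff_of_nonneg (fun i _ => sq_nonneg (B i p))).mp h m
            (Finset.mem_univ m)
          exact pow_eq_zero_iff (by norm_num) |>.mp this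
        rw [hz i, hz j, h]; ring
      · simp only [hvp, if_neg h, WithLp.ofLp_toLp]
        rw [div_mul_div_comm, Real.mul_self_sqrt (hlam0 p)]
        field_simp
    have hsum : toELM (B * B.transpose) = ∑ p : Fin k, lam p • g (vp p) := by
      ext q
      have happ : (∑ p : Fin k, lam p • g (vp p)) q = ∑ p : Fin k, lam p * g (vp p) q := by
        induction (Finset.univ : Finset (Fin k)) using Finset.induction_on with
        | empty => rfl
        | insert a s h ih => rw [Finset.sum_insert h, Finset.sum_insert h, ← ih]; rfl
      rw [happ]
      simp only [toELM_apply, Matrix.mul_apply, Matrix.transpose_apply, g, Matrix.of_apply]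
      exact Finset.sum_congr rfl fun p _ => hkey p q.1 q.2
    by_cases htz : t = 0
    · have hlamz : ∀ p, lam p = 0 := by
        intro p
        have hzz : ∑ p, lam p = 0 := by rw [← ht]; exact htz
        exact (Finset.sum_eq_zero_iff_of_nonneg (fun p _ => hlam0 p)).mp hzz p (Finset.mem_univ p)
      refine ⟨0, le_rfl, g (e₀ hd),
        subset_convexHull ℝ _ (Set.mem_image_of_mem g (e₀_mem_T hd)), ?_⟩
      rw [hsum]
      simp only [hlamz, zero_smul, Finset.sum_const_zero]
    · have htpos : 0 < t := lt_of_le_of_ne ht0 (Ne.symm htz)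
      set x : EuclideanSpace ℝ (Fin d × Fin d) := ∑ p : Fin k, (lam p / t) • g (vp p) with hx
      have hxmem : x ∈ convexHull ℝ (S d) := by
        have hsum1 : ∑ p : Fin k, lam p / t = 1 := by
          rw [← Finset.sum_div, ← ht, div_self htz]
        have := Finset.univ.centerMass_mem_convexHull (w := fun p => lam p / t)
          (z := fun p => g (vp p)) (fun p _ => div_nonneg (hlam0 p) ht0)
          (by rw [hsum1]; norm_num) (fun p _ => Set.mem_image_of_mem g (hvpT p))
        rwa [Finset.centerMass_eq_of_sum_1 _ _ hsum1] at this
      refine ⟨t, ht0, x, hxmem, ?_⟩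
      rw [hsum, hx, Finset.smul_sum]
      refine Finset.sum_congr rfl fun p _ => ?_
      rw [smul_smul, mul_div_cancel₀ _ htz]
  · rintro - ⟨t, ht, x, hx, rfl⟩
    have hSsub : S d ⊆ toELM '' CPset d := by
      rintro - ⟨v, ⟨hv0, _⟩, rfl⟩
      exact ⟨Matrix.of fun i j => v i * v j, cp_outer hv0, rfl⟩
    have himg : Convex ℝ (toELM '' CPset d) := convex_CPset.linear_image toELM
    obtain ⟨C, hC, rfl⟩ := convexHull_min hSsub himg hx
    exact ⟨t • C, cp_smul ht hC, (toELM.map_smul t C)⟩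

end

end CPAux

namespace CPAux

variable {d : ℕ}


noncomputable section

lemma isClosed_Rset (hd : 0 < d) : IsClosed (Rset d) := by
  have hcH : IsCompact (convexHull ℝ (S d)) := isCompact_convexHull_of_isCompact isCompact_S
  refine isClosed_of_closure_subset ?_
  intro y hy
  set r : ℝ := trE y + 1 with hr
  set Im : Set (EuclideanSpace ℝ (Fin d × Fin d)) :=
    (fun p : ℝ × EuclideanSpace ℝ (Fin d × Fin d) => p.1 • p.2) '' (Icc 0 r ×ˢ convexHull ℝ (S d))
    with hIm
  have hImcomp : IsCompact Im :=
    ((isCompact_Icc).prod hcH).image (continuous_fst.smul continuous_snd)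
  have hImR : Im ⊆ Rset d := by
    rintro - ⟨⟨t, x⟩, ⟨⟨ht0, _⟩, hx⟩, rfl⟩
    exact ⟨t, ht0, x, hx, rfl⟩
  obtain ⟨u, hu, hlim⟩ := mem_closure_iff_seq_limit.mp hy
  have htr : Filter.Tendsto (fun n => trE (u n)) Filter.atTop (𝓝 (trE y)) :=
    (cont_trE.tendsto y).comp hlim
  have hev : ∀ᶠ n in Filter.atTop, u n ∈ Im := by
    have hlt : ∀ᶠ n in Filter.atTop, trE (u n) ≤ r :=
      htr.eventually (eventually_le_nhds (by rw [hr]; linarith))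
    filter_upwards [hlt] with n hn
    obtain ⟨t, ht0, x, hx, hux⟩ := hu n
    have htx : trE (u n) = t := by
      rw [hux, trE_smul, trE_convexHull x hx, mul_one]
    exact ⟨(t, x), ⟨⟨ht0, by rw [← htx]; exact hn⟩, hx⟩, hux.symm⟩
  exact hImR (hImcomp.isClosed.mem_of_tendsto hlim hev)

lemma isClosed_Kcone (hd : 0 < d) :
    IsClosed (Kcone d : Set (EuclideanSpace ℝ (Fin d × Fin d))) := by
  rw [Kcone_eq_Rset hd]; exact isClosed_Rset hd

end

end CPAux

namespace CPAux

variable {d : ℕ}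

lemma backward (hd : 0 < d) {C : Matrix (Fin d) (Fin d) ℝ} (hC : C.IsSymm)
    (h : ∀ X : Matrix (Fin d) (Fin d) ℝ, X.IsSymm → Copositive X → 0 ≤ (C * X).trace) :
    CompletelyPositive C := by
  classical
  by_contra hcp
  have hb : toELM C ∉ Kcone d := by
    rintro ⟨C', hC', hE⟩
    exact hcp (toELM_inj hE ▸ hC')
  obtain ⟨y, hy1, hy2⟩ : ∃ y, (∀ x ∈ Kcone d, 0 ≤ ⟪x, y⟫_ℝ) ∧ ⟪y, toELM C⟫_ℝ < 0 := by
    obtain ⟨y, h1, h2⟩ := ProperCone.hyperplane_separation'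
      ({ toSubmodule := (Kcone d).toPointedCone ⟨0, cp_zero, map_zero _⟩,
         isClosed' := isClosed_Kcone hd } : ProperCone ℝ (EuclideanSpace ℝ (Fin d × Fin d))) hb
    exact ⟨y, h1, by rwa [real_inner_comm]⟩
  set X : Matrix (Fin d) (Fin d) ℝ := Matrix.of fun i j => (y (i, j) + y (j, i)) / 2 with hX
  have hXsymm : X.IsSymm := by
    ext i j
    simp only [hX, Matrix.transpose_apply, Matrix.of_apply]
    ring
  have hXcop : Copositive X := by
    intro v hv
    have houter : (0:ℝ) ≤ ⟪toELM (Matrix.of fun i j => v i * v j), y⟫_ℝ :=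
      hy1 _ ⟨_, cp_outer hv, rfl⟩
    rw [inner_eq] at houter
    simp only [toELM_apply, Matrix.of_apply] at houter
    rw [Fintype.sum_prod_type] at houter
    have E2 : (∑ i : Fin d, ∑ j : Fin d, v i * v j * y (j, i))
        = ∑ i : Fin d, ∑ j : Fin d, v i * v j * y (i, j) := by
      rw [Finset.sum_comm]
      exact Finset.sum_congr rfl fun i _ => Finset.sum_congr rfl fun j _ => by ring
    have E1 : v ⬝ᵥ X.mulVec v
        = ((∑ i : Fin d, ∑ j : Fin d, v i * v j * y (i, j))
          + ∑ i : Fin d, ∑ j : Fin d, v i * v j * y (j, i)) / 2 := by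
      simp only [dotProduct, Matrix.mulVec, hX, Matrix.of_apply]
      rw [← Finset.sum_add_distrib, Finset.sum_div]
      refine Finset.sum_congr rfl fun i _ => ?_
      rw [Finset.mul_sum, ← Finset.sum_add_distrib, Finset.sum_div]
      refine Finset.sum_congr rfl fun j _ => ?_
      ring
    rw [E1, E2]
    have : (0:ℝ) ≤ ∑ i : Fin d, ∑ j : Fin d, v i * v j * y (i, j) := houter
    linarith
  have hCs : ∀ i j, C j i = C i j := fun i j => congrFun (congrFun hC i) j
  have F2 : (∑ i : Fin d, ∑ j : Fin d, C i j * y (j, i))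
      = ∑ i : Fin d, ∑ j : Fin d, C i j * y (i, j) := by
    rw [Finset.sum_comm]
    refine Finset.sum_congr rfl fun i _ => Finset.sum_congr rfl fun j _ => ?_
    rw [hCs j i]
  have F1 : (C * X).trace
      = ((∑ i : Fin d, ∑ j : Fin d, C i j * y (j, i))
        + ∑ i : Fin d, ∑ j : Fin d, C i j * y (i, j)) / 2 := by
    simp only [Matrix.trace, Matrix.diag, Matrix.mul_apply, hX, Matrix.of_apply]
    rw [← Finset.sum_add_distrib, Finset.sum_div]
    refine Finset.sum_congr rfl fun i _ => ?_
    rw [← Finset.sum_add_distrib, Finset.sum_div]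
    refine Finset.sum_congr rfl fun j _ => ?_
    ring
  have htrace : (C * X).trace = ⟪y, toELM C⟫_ℝ := by
    rw [F1, F2, inner_eq]
    simp only [toELM_apply]
    rw [Fintype.sum_prod_type]
    have : (∑ i : Fin d, ∑ j : Fin d, y (i, j) * C i j)
        = ∑ i : Fin d, ∑ j : Fin d, C i j * y (i, j) := by
      exact Finset.sum_congr rfl fun i _ => Finset.sum_congr rfl fun j _ => by ring
    rw [this]
    ring
  have := h X hXsymm hXcop
  rw [htrace] at this
  linarith

end CPAux


theorem cp_iff_nonneg_inner_with_copositive {d : ℕ} (C : Matrix (Fin d) (Fin d) ℝ)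
    (hC : C.IsSymm) :
    CompletelyPositive C ↔
      ∀ X : Matrix (Fin d) (Fin d) ℝ, X.IsSymm → Copositive X → 0 ≤ (C * X).trace := by
  constructor
  · intro h X _ hXcop
    exact CPAux.forward h hXcop
  · intro h
    rcases Nat.eq_zero_or_pos d with hd | hd
    · subst hd
      exact ⟨0, 0, fun i j => le_rfl, by ext i j; exact i.elim0⟩
    · exact CPAux.backward hd hC h
end

section
/- Let x* be the analytic center of Q = {x : ‖x‖² ≤ r², Ax ≤ b} (nonempty interior), and let x be any point in the interior of the domain of Φ. Then the gradient of the conic barrier f(t, x̃, σ) = −log(t² − ‖x̃‖²) − Σᵢ log(σᵢ) at the point (r, x*, b − Ax*) is orthogonal to the vector (0, x − x*, A(x* − x)). -/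
open Matrix

noncomputable def barrier {n m : ℕ} (a : Fin m → Fin n → ℝ) (b : Fin m → ℝ) (r : ℝ)
    (x : Fin n → ℝ) : ℝ :=
  -Real.log (r ^ 2 - ∑ j, x j ^ 2) - ∑ i, Real.log (b i - a i ⬝ᵥ x)

def interiorDom {n m : ℕ} (a : Fin m → Fin n → ℝ) (b : Fin m → ℝ) (r : ℝ) :
    Set (Fin n → ℝ) :=
  {x | (∑ j, x j ^ 2) < r ^ 2 ∧ ∀ i, a i ⬝ᵥ x < b i}

/-- At the analytic center x*, the gradient of the conic barrier
f(t,x̃,σ) = −log(t²−‖x̃‖²) − Σ log σᵢ at (r, x*, b − Ax*) is orthogonal to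
(0, x − x*, A(x* − x)); explicitly, the indicated inner product vanishes. -/
theorem conic_barrier_gradient_orthogonal {n m : ℕ}
    (a : Fin m → Fin n → ℝ) (b : Fin m → ℝ) (r : ℝ) (hr : 0 < r)
    (xstar : Fin n → ℝ) (hxstar : xstar ∈ interiorDom a b r)
    (hmin : ∀ x ∈ interiorDom a b r, barrier a b r xstar ≤ barrier a b r x)
    (x : Fin n → ℝ) (hx : x ∈ interiorDom a b r) :
    2 * (xstar ⬝ᵥ (x - xstar)) / (r ^ 2 - ∑ j, xstar j ^ 2) -
      ∑ i, (a i ⬝ᵥ (xstar - x)) / (b i - a i ⬝ᵥ xstar) = 0 := by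
  obtain ⟨h1, h2⟩ := hxstar
  set d : Fin n → ℝ := x - xstar with hd
  set S : ℝ := r ^ 2 - ∑ j, xstar j ^ 2 with hS
  have hSpos : 0 < S := sub_pos.mpr h1
  set φ : ℝ → ℝ := fun t => barrier a b r (xstar + t • d) with hφ
  -- rewrite φ explicitly
  have hφeq : φ = fun t => -Real.log (r ^ 2 - ∑ j, (xstar j + t * d j) ^ 2) -
      ∑ i, Real.log ((b i - a i ⬝ᵥ xstar) - t * (a i ⬝ᵥ d)) := by
    funext t
    simp only [hφ, barrier, Pi.add_apply, Pi.smul_apply, smul_eq_mul]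
    congr 1
    refine Finset.sum_congr rfl fun i _ => ?_
    congr 1
    have : a i ⬝ᵥ (xstar + t • d) = a i ⬝ᵥ xstar + t * (a i ⬝ᵥ d) := by
      rw [dotProduct_add, dotProduct_smul, smul_eq_mul]
    rw [this]; ring
  -- derivative of φ at 0
  have hderiv : HasDerivAt φ
      (2 * (xstar ⬝ᵥ d) / S + ∑ i, (a i ⬝ᵥ d) / (b i - a i ⬝ᵥ xstar)) 0 := by
    rw [hφeq]
    have hg1 : HasDerivAt (fun t : ℝ => r ^ 2 - ∑ j, (xstar j + t * d j) ^ 2)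
        (-(2 * (xstar ⬝ᵥ d))) 0 := by
      have hsum : HasDerivAt (fun t : ℝ => ∑ j, (xstar j + t * d j) ^ 2)
          (∑ j, 2 * xstar j * d j) 0 := by
        apply HasDerivAt.fun_sum
        intro j _
        have h := (((hasDerivAt_id (0:ℝ)).mul_const (d j)).const_add (xstar j)).fun_pow 2
        simpa using h
      have : (∑ j, 2 * xstar j * d j) = 2 * (xstar ⬝ᵥ d) := by
        simp only [dotProduct, Finset.mul_sum]
        exact Finset.sum_congr rfl fun j _ => by ring
      rw [← this]
      simpa using hsum.const_sub (r ^ 2)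
    have hlog1 : HasDerivAt (fun t : ℝ => -Real.log (r ^ 2 - ∑ j, (xstar j + t * d j) ^ 2))
        (2 * (xstar ⬝ᵥ d) / S) 0 := by
      have hne : (r ^ 2 - ∑ j, (xstar j + (0:ℝ) * d j) ^ 2) ≠ 0 := by
        simpa using hSpos.ne'
      have := (hg1.log hne).neg
      refine this.congr_deriv ?_
      simp [hS, neg_div]
    have hlog2 : HasDerivAt (fun t : ℝ => ∑ i, Real.log ((b i - a i ⬝ᵥ xstar) - t * (a i ⬝ᵥ d)))
        (∑ i, -((a i ⬝ᵥ d) / (b i - a i ⬝ᵥ xstar))) 0 := by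
      apply HasDerivAt.fun_sum
      intro i _
      have hi : HasDerivAt (fun t : ℝ => (b i - a i ⬝ᵥ xstar) - t * (a i ⬝ᵥ d))
          (-(a i ⬝ᵥ d)) 0 := by
        simpa using ((hasDerivAt_id (0:ℝ)).mul_const (a i ⬝ᵥ d)).const_sub (b i - a i ⬝ᵥ xstar)
      have hne : (b i - a i ⬝ᵥ xstar) - (0:ℝ) * (a i ⬝ᵥ d) ≠ 0 := by
        simpa using (sub_pos.mpr (h2 i)).ne'
      have := hi.log hne
      refine this.congr_deriv ?_
      simp [neg_div]
    have := hlog1.sub hlog2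
    refine this.congr_deriv ?_
    simp [Finset.sum_neg_distrib]
  -- local min
  have hopen : IsOpen (interiorDom a b r) := by
    have : interiorDom a b r =
        {y : Fin n → ℝ | ∑ j, y j ^ 2 < r ^ 2} ∩ ⋂ i, {y | ∑ j, a i j * y j < b i} := by
      ext y; simp [interiorDom, dotProduct]
    rw [this]
    refine IsOpen.inter ?_ (isOpen_iInter_of_finite fun i => ?_)
    · exact isOpen_lt (continuous_finset_sum _ fun j _ => (continuous_apply j).pow 2)
        continuous_const
    · exact isOpen_lt (continuous_finset_sum _ fun j _ =>
        continuous_const.mul (continuous_apply j)) continuous_const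
  have hc : Continuous fun t : ℝ => xstar + t • d := by continuity
  have hev : ∀ᶠ t in nhds (0:ℝ), (xstar + t • d) ∈ interiorDom a b r := by
    have hmem : interiorDom a b r ∈ nhds (xstar + (0:ℝ) • d) := by
      apply hopen.mem_nhds; simpa using ⟨h1, h2⟩
    exact hc.continuousAt.preimage_mem_nhds hmem
  have hlm : IsLocalMin φ 0 := by
    filter_upwards [hev] with t ht
    have := hmin _ ht
    simpa [hφ] using this
  have hz := hlm.hasDerivAt_eq_zero hderiv
  have hrw : ∀ i, a i ⬝ᵥ (xstar - x) = -(a i ⬝ᵥ d) := by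
    intro i
    have : xstar - x = -d := by rw [hd]; abel
    rw [this, dotProduct_neg]
  have hsum2 : ∑ i, (a i ⬝ᵥ (xstar - x)) / (b i - a i ⬝ᵥ xstar)
      = -∑ i, (a i ⬝ᵥ d) / (b i - a i ⬝ᵥ xstar) := by
    rw [← Finset.sum_neg_distrib]
    exact Finset.sum_congr rfl fun i _ => by rw [hrw i, neg_div]
  rw [hsum2, sub_neg_eq_add]
  exact hz
end

section
/- Let X ∈ S^d and let B = max_{k,l} |X_{kl}|. Suppose (y, z, μ, ν) is feasible for the MILP: Xy + μe − ν = 0, eᵀy = 1, 0 ≤ yᵢ ≤ zᵢ, 0 ≤ νᵢ ≤ 2dB(1 − zᵢ), zᵢ ∈ {0,1} for all i. Then yᵀXy = −μ + yᵀν ≥ −μ, and if additionally yᵢνᵢ = 0 for all i (complementarity, which holds automatically since yᵢ ≤ zᵢ and νᵢ ≤ 2dB(1−zᵢ) with zᵢ ∈ {0,1}), then yᵀXy = −μ. In particular, the minimum of −μ over feasible points is a lower bound on the minimum of yᵀXy over the simplex. -/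
open Matrix

/-- Any feasible point of the Xia–Vera–Zuluaga MILP satisfies yᵀXy = −μ + yᵀν;
complementarity yᵢνᵢ = 0 holds automatically, so yᵀXy = −μ. In particular −μ is
a lower bound on yᵀXy over feasible points. -/
theorem milp_feasible_point_value {d : ℕ} (X : Matrix (Fin d) (Fin d) ℝ)
    (hX : X.IsSymm) (B : ℝ) (hB : IsGreatest {v : ℝ | ∃ k l, v = |X k l|} B)
    (y ν : Fin d → ℝ) (μ : ℝ) (z : Fin d → ℝ)
    (hstat : ∀ i, X.mulVec y i + μ - ν i = 0)
    (hsum : (∑ i, y i) = 1)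
    (hy : ∀ i, 0 ≤ y i ∧ y i ≤ z i)
    (hν : ∀ i, 0 ≤ ν i ∧ ν i ≤ 2 * d * B * (1 - z i))
    (hz : ∀ i, z i = 0 ∨ z i = 1) :
    y ⬝ᵥ X.mulVec y = -μ + y ⬝ᵥ ν ∧
      (∀ i, y i * ν i = 0) ∧
      y ⬝ᵥ X.mulVec y = -μ ∧
      -μ ≤ y ⬝ᵥ X.mulVec y := by
  have hcomp : ∀ i, y i * ν i = 0 := by
    intro i
    rcases hz i with h0 | h1
    · have : y i = 0 := le_antisymm (h0 ▸ (hy i).2) (hy i).1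
      simp [this]
    · have : ν i = 0 := le_antisymm (by simpa [h1] using (hν i).2) (hν i).1
      simp [this]
  have hval : y ⬝ᵥ X.mulVec y = -μ + y ⬝ᵥ ν := by
    have h : ∀ i, X.mulVec y i = ν i - μ := fun i => by linarith [hstat i]
    calc y ⬝ᵥ X.mulVec y = ∑ i, y i * (ν i - μ) := by
          simp only [dotProduct]; exact Finset.sum_congr rfl fun i _ => by rw [h i]
      _ = (∑ i, y i * ν i) - (∑ i, y i) * μ := by
          simp only [mul_sub]; rw [Finset.sum_sub_distrib, Finset.sum_mul]
      _ = -μ + y ⬝ᵥ ν := by rw [hsum, dotProduct]; ring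
  have hzero : y ⬝ᵥ ν = 0 := by
    simp only [dotProduct]
    exact Finset.sum_eq_zero fun i _ => hcomp i
  refine ⟨hval, hcomp, ?_, ?_⟩ <;> rw [hval, hzero] <;> simp
end

section
/- Let X ∈ S^d with B = max_{k,l}|X_{kl}|, and let y* be a minimizer of yᵀXy over the standard simplex. Then each component of the gradient satisfies |(Xy*)ᵢ| ≤ B, and setting μ = −min_i (Xy*)ᵢ and ν = Xy* + μe ≥ 0, one has 0 ≤ νᵢ ≤ 2B ≤ 2dB for all i. Moreover, by KKT optimality, νᵢ yᵢ* = 0 for all i, so (y*, z, μ, ν) with zᵢ = 1 if yᵢ* > 0 and zᵢ = 0 otherwise is feasible for the MILP and attains objective −μ = (y*)ᵀXy*. -/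
open Matrix

/-- From a minimizer y* of yᵀXy over the standard simplex one obtains a feasible
point of the Xia–Vera–Zuluaga MILP with objective value −μ = (y*)ᵀXy*:
setting μ = −minᵢ (Xy*)ᵢ, ν = Xy* + μe, and z the indicator of supp(y*),
one has |(Xy*)ᵢ| ≤ B, 0 ≤ νᵢ ≤ 2B ≤ 2dB, complementarity νᵢyᵢ* = 0,
and all the MILP constraints hold. -/
theorem milp_upper_bound_from_simplex_minimizer {d : ℕ} [NeZero d]
    (X : Matrix (Fin d) (Fin d) ℝ) (hX : X.IsSymm)
    (B : ℝ) (hB : IsGreatest {v : ℝ | ∃ k l, v = |X k l|} B)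
    (ystar : Fin d → ℝ) (hynn : ∀ i, 0 ≤ ystar i) (hysum : (∑ i, ystar i) = 1)
    (hymin : ∀ y : Fin d → ℝ, (∀ i, 0 ≤ y i) → (∑ i, y i) = 1 →
      ystar ⬝ᵥ X.mulVec ystar ≤ y ⬝ᵥ X.mulVec y)
    (μ : ℝ) (hμ : μ = -(Finset.univ.inf' (Finset.univ_nonempty) fun i => X.mulVec ystar i))
    (ν : Fin d → ℝ) (hν : ∀ i, ν i = X.mulVec ystar i + μ)
    (z : Fin d → ℝ) (hz : ∀ i, z i = if 0 < ystar i then 1 else 0) :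
    (∀ i, |X.mulVec ystar i| ≤ B) ∧
      (∀ i, 0 ≤ ν i ∧ ν i ≤ 2 * B) ∧ 2 * B ≤ 2 * d * B ∧
      (∀ i, ν i * ystar i = 0) ∧
      (∀ i, X.mulVec ystar i + μ - ν i = 0) ∧
      (∀ i, 0 ≤ ystar i ∧ ystar i ≤ z i) ∧
      (∀ i, 0 ≤ ν i ∧ ν i ≤ 2 * d * B * (1 - z i)) ∧
      (∀ i, z i = 0 ∨ z i = 1) ∧
      -μ = ystar ⬝ᵥ X.mulVec ystar := by
  have hBnn : 0 ≤ B := by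
    obtain ⟨k, l, hkl⟩ := hB.1
    rw [hkl]; positivity
  have hBent : ∀ a b, |X a b| ≤ B := fun a b => hB.2 ⟨a, b, rfl⟩
  -- gradient bound
  have habs : ∀ i, |X.mulVec ystar i| ≤ B := by
    intro i
    have h1 : X.mulVec ystar i = ∑ j, X i j * ystar j := rfl
    rw [h1]
    calc |∑ j, X i j * ystar j| ≤ ∑ j, |X i j * ystar j| :=
          Finset.abs_sum_le_sum_abs _ _
      _ = ∑ j, |X i j| * ystar j := by
          apply Finset.sum_congr rfl
          intro j _
          rw [abs_mul, abs_of_nonneg (hynn j)]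
      _ ≤ ∑ j, B * ystar j :=
          Finset.sum_le_sum fun j _ =>
            mul_le_mul_of_nonneg_right (hBent i j) (hynn j)
      _ = B := by rw [← Finset.mul_sum, hysum, mul_one]
  set m : ℝ := Finset.univ.inf' Finset.univ_nonempty (fun i => X.mulVec ystar i) with hm
  have hmle : ∀ i, m ≤ X.mulVec ystar i := fun i =>
    Finset.inf'_le _ (Finset.mem_univ i)
  have hmB : -B ≤ m := by
    apply Finset.le_inf'
    intro j _
    have := habs j
    cases abs_le.1 this with
    | intro h1 h2 => linarith
  obtain ⟨k, -, hkm⟩ := Finset.exists_mem_eq_inf' (Finset.univ_nonempty (α := Fin d))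
    (fun i => X.mulVec ystar i)
  -- KKT: active gradient equals the minimum
  have hkey : ∀ i, 0 < ystar i → X.mulVec ystar i ≤ m := by
    intro i hi
    by_contra hlt
    push_neg at hlt
    set δ : ℝ := X.mulVec ystar i - m with hδ
    have hδpos : 0 < δ := by simp [hδ]; linarith
    set t : ℝ := min (ystar i) (δ / (4 * B + 1)) with ht
    have htpos : 0 < t := lt_min hi (div_pos hδpos (by linarith))
    have hty : t ≤ ystar i := min_le_left _ _
    have htδ : t * (4 * B) < δ := by
      have h2 : t ≤ δ / (4 * B + 1) := min_le_right _ _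
      have h3 : t * (4 * B + 1) ≤ δ := by
        rw [← le_div_iff₀ (by linarith : (0:ℝ) < 4 * B + 1)]
        exact h2
      nlinarith
    set u : Fin d → ℝ := fun j => (if j = k then (1:ℝ) else 0) - (if j = i then 1 else 0)
      with hu
    set y' : Fin d → ℝ := fun j => ystar j + t * u j with hy'
    have huk : ∀ v : Fin d → ℝ, (∑ j, u j * v j) = v k - v i := by
      intro v
      simp only [hu, sub_mul, one_mul, zero_mul, ite_mul, Finset.sum_sub_distrib,
        Finset.sum_ite_eq', Finset.mem_univ, if_true]
    have hy'nn : ∀ j, 0 ≤ y' j := by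
      intro j
      have := hynn j
      by_cases hjk : j = k <;> by_cases hji : j = i <;>
        simp only [hy', hu, hjk, hji, if_true, if_false, sub_self, mul_zero, sub_zero,
          zero_sub, mul_one, mul_neg] <;>
        first
          | linarith
          | (subst hji; simp [hjk]; linarith)
          | (subst hjk; simp [hji]; linarith)
    have hy'sum : ∑ j, y' j = 1 := by
      simp only [hy', hu]
      rw [Finset.sum_add_distrib, hysum, ← Finset.mul_sum]
      simp [Finset.sum_sub_distrib, Finset.sum_ite_eq', Finset.mem_univ]
    -- quadratic expansion
    have hvecmul : X.vecMul ystar = X.mulVec ystar := by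
      conv_rhs => rw [← hX]
      rw [Matrix.mulVec_transpose]
    have hS1 : u ⬝ᵥ X.mulVec ystar = -δ := by
      rw [show u ⬝ᵥ X.mulVec ystar = ∑ j, u j * X.mulVec ystar j from rfl, huk]
      simp [hδ, ← hkm]
      exact hm.symm
    have hS2 : ystar ⬝ᵥ X.mulVec u = -δ := by
      rw [Matrix.dotProduct_mulVec, hvecmul]
      rw [show X.mulVec ystar ⬝ᵥ u = ∑ j, u j * X.mulVec ystar j from by
        simp [dotProduct, mul_comm], huk]
      simp [hδ, ← hkm]
      exact hm.symm
    have hmvu : ∀ j, X.mulVec u j = X j k - X j i := by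
      intro j
      rw [show X.mulVec u j = ∑ l, X j l * u l from rfl]
      simp only [hu, mul_sub, mul_ite, mul_one, mul_zero, Finset.sum_sub_distrib,
        Finset.sum_ite_eq', Finset.mem_univ, if_true]
    have hS3 : u ⬝ᵥ X.mulVec u = (X k k - X k i) - (X i k - X i i) := by
      rw [show u ⬝ᵥ X.mulVec u = ∑ j, u j * X.mulVec u j from rfl, huk, hmvu, hmvu]
    have hS3bd : |u ⬝ᵥ X.mulVec u| ≤ 4 * B := by
      rw [hS3]
      have h1 := hBent k k; have h2 := hBent k i
      have h3 := hBent i k; have h4 := hBent i i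
      have a1 := abs_le.1 h1; have a2 := abs_le.1 h2
      have a3 := abs_le.1 h3; have a4 := abs_le.1 h4
      rw [abs_le]; constructor <;> [skip; skip] <;>
        · obtain ⟨b1, c1⟩ := a1; obtain ⟨b2, c2⟩ := a2
          obtain ⟨b3, c3⟩ := a3; obtain ⟨b4, c4⟩ := a4
          linarith
    have hexp : y' ⬝ᵥ X.mulVec y' =
        ystar ⬝ᵥ X.mulVec ystar - 2 * t * δ + t ^ 2 * (u ⬝ᵥ X.mulVec u) := by
      have hy'eq : y' = ystar + t • u := by
        funext j; simp [hy', smul_eq_mul]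
      rw [hy'eq]
      rw [Matrix.mulVec_add, Matrix.mulVec_smul, dotProduct_add, add_dotProduct,
        add_dotProduct, dotProduct_smul, dotProduct_smul, smul_dotProduct,
        smul_dotProduct, hS1, hS2]
      simp only [smul_eq_mul]
      ring
    have hcontr := hymin y' hy'nn hy'sum
    rw [hexp] at hcontr
    have hq : t ^ 2 * (u ⬝ᵥ X.mulVec u) ≤ t * (t * (4 * B)) := by
      have := (abs_le.1 hS3bd).2
      nlinarith
    nlinarith
  have hkeyeq : ∀ i, 0 < ystar i → X.mulVec ystar i = m := fun i hi =>
    le_antisymm (hkey i hi) (hmle i)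
  have hνnn : ∀ i, 0 ≤ ν i := by
    intro i; rw [hν i, hμ]
    have := hmle i; linarith
  have hν2B : ∀ i, ν i ≤ 2 * B := by
    intro i; rw [hν i, hμ]
    have h1 := (abs_le.1 (habs i)).2
    linarith
  have hcomp : ∀ i, ν i * ystar i = 0 := by
    intro i
    rcases lt_or_eq_of_le (hynn i) with hpos | heq
    · have : ν i = 0 := by rw [hν i, hμ, hkeyeq i hpos]; ring
      rw [this, zero_mul]
    · rw [← heq, mul_zero]
  have hd1 : (1:ℝ) ≤ (d:ℝ) := by
    have : 1 ≤ d := Nat.one_le_iff_ne_zero.2 (NeZero.ne d)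
    exact_mod_cast this
  have h2dB : 2 * B ≤ 2 * d * B := by nlinarith
  refine ⟨habs, fun i => ⟨hνnn i, hν2B i⟩, h2dB, hcomp, ?_, ?_, ?_, ?_, ?_⟩
  · intro i; rw [hν i]; ring
  · intro i
    refine ⟨hynn i, ?_⟩
    rw [hz i]
    rcases lt_or_eq_of_le (hynn i) with hpos | heq
    · rw [if_pos hpos]
      calc ystar i ≤ ∑ j, ystar j :=
            Finset.single_le_sum (fun j _ => hynn j) (Finset.mem_univ i)
        _ = 1 := hysum
    · rw [if_neg (by rw [← heq]; exact lt_irrefl 0), ← heq]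
  · intro i
    refine ⟨hνnn i, ?_⟩
    rw [hz i]
    rcases lt_or_eq_of_le (hynn i) with hpos | heq
    · rw [if_pos hpos]
      have : ν i = 0 := by rw [hν i, hμ, hkeyeq i hpos]; ring
      rw [this]; ring_nf; positivity
    · rw [if_neg (by rw [← heq]; exact lt_irrefl 0)]
      have := hν2B i
      linarith
  · intro i
    rw [hz i]
    by_cases h : 0 < ystar i
    · right; rw [if_pos h]
    · left; rw [if_neg h]
  · have hQ : ystar ⬝ᵥ X.mulVec ystar = ∑ i, ν i * ystar i - μ * ∑ i, ystar i := by
      rw [Finset.mul_sum, ← Finset.sum_sub_distrib]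
      apply Finset.sum_congr rfl
      intro i _
      rw [hν i]; ring
    rw [hQ, hysum]
    simp [hcomp]
end
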